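/- A directed acyclic graph G is transitive if and only if every topological sort of G is a 2-clique extendable ordering of the underlying undirected graph of G. -/

import Mathlib

/-- A finite DAG is transitive iff every topological sort of it is a
2-clique extendable ordering of its underlying undirected graph. -/
theorem transitive_iff_topo_sorts_two_clique_extendable
    {V : Type*} [Fintype V] (E : V → V → Prop)
    (hacyc : ∀ v, ¬ Relation.TransGen E v v) :
    (∀ u v w, E u v → E v w → E u w) ↔
      (∀ σ : V → ℕ, Function.Injective σ →
        (∀ u v, E u v → σ u < σ v) →
        ∀ a b c : V, σ a < σ b → σ b < σ c →
          (E a b ∨ E b a) → (E b c ∨ E c b) → (E a c ∨ E c a)) := by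
  classical
  constructor
  · intro htr σ hinj hmono a b c hab hbc h1 h2
    have e1 : E a b := by
      rcases h1 with h | h
      · exact h
      · exact absurd (hmono _ _ h) (by omega)
    have e2 : E b c := by
      rcases h2 with h | h
      · exact h
      · exact absurd (hmono _ _ h) (by omega)
    exact Or.inl (htr a b c e1 e2)
  · intro H u v w huv hvw
    -- build a topological sort
    set le : V → V → Prop := fun a b => a = b ∨ Relation.TransGen E a b with hle
    haveI : IsPartialOrder V le :=
      { refl := fun a => Or.inl rfl
        trans := by
          rintro a b c (rfl | h1) (rfl | h2)
          · exact Or.inl rfl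
          · exact Or.inr h2
          · exact Or.inr h1
          · exact Or.inr (h1.trans h2)
        antisymm := by
          rintro a b (h1 | h1) (h2 | h2)
          · exact h1
          · exact h1
          · exact h2.symm
          · exact absurd (h1.trans h2) (hacyc a) }
    obtain ⟨s, hs, hles⟩ := extend_partialOrder le
    haveI := hs
    have strans : ∀ {a b c}, s a b → s b c → s a c := fun h1 h2 => IsTrans.trans _ _ _ h1 h2
    have santi : ∀ {a b}, s a b → s b a → a = b := fun h1 h2 => Std.Antisymm.antisymm _ _ h1 h2
    have stot : ∀ a b, s a b ∨ s b a := Std.Total.total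
    set P : V → Finset V := fun a => Finset.univ.filter (fun x => s x a ∧ x ≠ a) with hP
    have hssubset : ∀ {a b}, s a b → a ≠ b → P a ⊂ P b := by
      intro a b hab hne
      constructor
      · intro x hx
        simp only [hP, Finset.mem_filter, Finset.mem_univ, true_and] at hx ⊢
        refine ⟨strans hx.1 hab, ?_⟩
        rintro rfl
        exact hne (santi hab hx.1)
      · intro hsub
        have : a ∈ P b := by
          simp only [hP, Finset.mem_filter, Finset.mem_univ, true_and]
          exact ⟨hab, hne⟩
        have := hsub this
        simp [hP] at this
    set σ : V → ℕ := fun a => (P a).card with hσ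
    have hlt : ∀ {a b}, s a b → a ≠ b → σ a < σ b := by
      intro a b hab hne
      exact Finset.card_lt_card (hssubset hab hne)
    have hinj : Function.Injective σ := by
      intro a b h
      by_contra hne
      rcases stot a b with hs1 | hs1
      · exact absurd h (Nat.ne_of_lt (hlt hs1 hne))
      · exact absurd h.symm (Nat.ne_of_lt (hlt hs1 (Ne.symm hne)))
    have hEne : ∀ {a b}, Relation.TransGen E a b → a ≠ b := by
      rintro a b h rfl; exact hacyc a h
    have hEs : ∀ {a b}, E a b → σ a < σ b := by
      intro a b h
      have ht : Relation.TransGen E a b := Relation.TransGen.single h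
      exact hlt (hles _ _ (Or.inr ht)) (hEne ht)
    have := H σ hinj (fun a b h => hEs h) u v w (hEs huv) (hEs hvw)
      (Or.inl huv) (Or.inl hvw)
    rcases this with h | h
    · exact h
    · exact absurd ((Relation.TransGen.single huv).trans
        ((Relation.TransGen.single hvw).trans (Relation.TransGen.single h))) (hacyc u)
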